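/- Let c_0 ∈ X_{0,1}^+, assume the rate coefficients satisfy the growth condition (GB), and let c = (c_i)_{i≥0} be an admissible mild solution of the non-isolated DGED system with initial datum c_0. Then the total mass is conserved: for all t ≥ 0, ∑_{i=0}^∞ i c_i(t) = ∑_{i=0}^∞ i c_{0i}. -/

import Mathlib

open Finset MeasureTheory

/-- Infinite-system operator `Q_{1,i}`. -/
noncomputable def Qi1 (a : ℕ → ℕ → ℕ → ℝ) (c : ℕ → ℝ) (i : ℕ) : ℝ :=
  ∑' p : ℕ × ℕ, if 1 ≤ p.1 then a (i + p.1) p.2 p.1 * c (i + p.1) * c p.2 else 0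

/-- Infinite-system operator `Q_{2,i}`. -/
noncomputable def Qi2 (a : ℕ → ℕ → ℕ → ℝ) (c : ℕ → ℝ) (i : ℕ) : ℝ :=
  -∑' p : ℕ × ℕ, if 1 ≤ p.1 ∧ p.1 ≤ p.2 then a p.2 i p.1 * c p.2 * c i else 0

/-- Infinite-system operator `Q_{3,i}` (equal to `0` when `i = 0`). -/
noncomputable def Qi3 (a : ℕ → ℕ → ℕ → ℝ) (c : ℕ → ℝ) (i : ℕ) : ℝ :=
  ∑ k ∈ Finset.Icc 1 i, ∑' j : ℕ, if k ≤ j then a j (i - k) k * c j * c (i - k) else 0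

/-- Infinite-system operator `Q_{4,i}` (equal to `0` when `i = 0`). -/
noncomputable def Qi4 (a : ℕ → ℕ → ℕ → ℝ) (c : ℕ → ℝ) (i : ℕ) : ℝ :=
  -∑ k ∈ Finset.Icc 1 i, ∑' j : ℕ, a i j k * c j * c i

/-- Summability of all the series defining the operators `Q_{j,i}`. -/
def QSummable (a : ℕ → ℕ → ℕ → ℝ) (c : ℕ → ℝ) (i : ℕ) : Prop :=
  Summable (fun p : ℕ × ℕ =>
    if 1 ≤ p.1 then a (i + p.1) p.2 p.1 * c (i + p.1) * c p.2 else 0) ∧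
  Summable (fun p : ℕ × ℕ =>
    if 1 ≤ p.1 ∧ p.1 ≤ p.2 then a p.2 i p.1 * c p.2 * c i else 0) ∧
  (∀ k ∈ Finset.Icc 1 i,
    Summable (fun j : ℕ => if k ≤ j then a j (i - k) k * c j * c (i - k) else 0)) ∧
  (∀ k ∈ Finset.Icc 1 i, Summable (fun j : ℕ => a i j k * c j * c i))

/-- `c` is a mild solution of the isolated DGED system on the set `S` with
initial datum `c0 ∈ X_{0,1}^+`. -/
def MildSolIso (a : ℕ → ℕ → ℕ → ℝ) (c0 : ℕ → ℝ) (S : Set ℝ) (c : ℕ → ℝ → ℝ) : Prop :=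
  (∀ i, c i 0 = c0 i) ∧
  (∀ t ∈ S, (∀ i, 0 ≤ c i t) ∧ Summable (fun i : ℕ => (1 + (i : ℝ)) * c i t)) ∧
  (∀ i, ContinuousOn (c i) S) ∧
  (∀ i : ℕ, ∀ t ∈ S,
    (∀ᵐ s ∂(volume.restrict (Set.Ioc 0 t)), QSummable a (fun n => c n s) i) ∧
    IntegrableOn (fun s => Qi1 a (fun n => c n s) i) (Set.Ioc 0 t) ∧
    IntegrableOn (fun s => Qi2 a (fun n => c n s) i) (Set.Ioc 0 t) ∧
    IntegrableOn (fun s => Qi3 a (fun n => c n s) i) (Set.Ioc 0 t) ∧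
    IntegrableOn (fun s => Qi4 a (fun n => c n s) i) (Set.Ioc 0 t) ∧
    c i t = c0 i + ∫ s in (0 : ℝ)..t,
      (Qi1 a (fun n => c n s) i + Qi2 a (fun n => c n s) i +
        Qi3 a (fun n => c n s) i + Qi4 a (fun n => c n s) i))

/-- `c` is a mild solution of the non-isolated DGED system on the set `S` with
initial datum `c0 ∈ X_{0,1}^+`: the concentration of `0`-clusters is constant and the
components `c_i`, `i ≥ 1`, satisfy the integral equations. -/
def MildSolNon (a : ℕ → ℕ → ℕ → ℝ) (c0 : ℕ → ℝ) (S : Set ℝ) (c : ℕ → ℝ → ℝ) : Prop :=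
  (∀ i, c i 0 = c0 i) ∧
  (∀ t ∈ S, (∀ i, 0 ≤ c i t) ∧ Summable (fun i : ℕ => (1 + (i : ℝ)) * c i t)) ∧
  (∀ i, ContinuousOn (c i) S) ∧
  (∀ t ∈ S, c 0 t = c0 0) ∧
  (∀ i : ℕ, 1 ≤ i → ∀ t ∈ S,
    (∀ᵐ s ∂(volume.restrict (Set.Ioc 0 t)), QSummable a (fun n => c n s) i) ∧
    IntegrableOn (fun s => Qi1 a (fun n => c n s) i) (Set.Ioc 0 t) ∧
    IntegrableOn (fun s => Qi2 a (fun n => c n s) i) (Set.Ioc 0 t) ∧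
    IntegrableOn (fun s => Qi3 a (fun n => c n s) i) (Set.Ioc 0 t) ∧
    IntegrableOn (fun s => Qi4 a (fun n => c n s) i) (Set.Ioc 0 t) ∧
    c i t = c0 i + ∫ s in (0 : ℝ)..t,
      (Qi1 a (fun n => c n s) i + Qi2 a (fun n => c n s) i +
        Qi3 a (fun n => c n s) i + Qi4 a (fun n => c n s) i))

/-- Growth condition (GB) on the rate coefficients. -/
def GB (a : ℕ → ℕ → ℕ → ℝ) (C Q : ℝ) (q : ℕ → ℕ → ℝ) : Prop :=
  1 ≤ C ∧ 1 ≤ Q ∧ (∀ i k, 0 ≤ q i k) ∧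
  (∀ i : ℕ, 1 ≤ i →
    ∑ k ∈ Finset.Icc 1 i, (k : ℝ) * ((i : ℝ) - k + 1) * q i k ≤ Q * i) ∧
  (∀ i j k : ℕ, 1 ≤ k → k ≤ i → 1 ≤ j →
    a i j k ≤ C * ((i : ℝ) - k + 1) * ((j : ℝ) + k) * q i k)

/-- Truncated operator `Q^N_{1,i}`. -/
noncomputable def QN1 (a : ℕ → ℕ → ℕ → ℝ) (N : ℕ) (c : ℕ → ℝ) (i : ℕ) : ℝ :=
  ∑ k ∈ Finset.Icc 1 (N - i), ∑ j ∈ Finset.Icc 0 (N - k), a (i + k) j k * c (i + k) * c j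

/-- Truncated operator `Q^N_{2,i}`. -/
noncomputable def QN2 (a : ℕ → ℕ → ℕ → ℝ) (N : ℕ) (c : ℕ → ℝ) (i : ℕ) : ℝ :=
  -∑ k ∈ Finset.Icc 1 (N - i), ∑ j ∈ Finset.Icc k N, a j i k * c j * c i

/-- Truncated operator `Q^N_{3,i}`. -/
noncomputable def QN3 (a : ℕ → ℕ → ℕ → ℝ) (N : ℕ) (c : ℕ → ℝ) (i : ℕ) : ℝ :=
  ∑ k ∈ Finset.Icc 1 i, ∑ j ∈ Finset.Icc k N, a j (i - k) k * c j * c (i - k)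

/-- Truncated operator `Q^N_{4,i}`. -/
noncomputable def QN4 (a : ℕ → ℕ → ℕ → ℝ) (N : ℕ) (c : ℕ → ℝ) (i : ℕ) : ℝ :=
  -∑ k ∈ Finset.Icc 1 i, ∑ j ∈ Finset.Icc 0 (N - k), a i j k * c j * c i


/-- `c` is a solution of the `N`-truncated non-isolated DGED system on the set `I`. -/
def IsTruncSolNon (a : ℕ → ℕ → ℕ → ℝ) (N : ℕ) (I : Set ℝ) (c : ℕ → ℝ → ℝ) : Prop :=
  ∀ t ∈ I,
    HasDerivAt (c 0) 0 t ∧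
    (∀ i, 1 ≤ i → i ≤ N - 1 →
      HasDerivAt (c i)
        (QN1 a N (fun n => c n t) i + QN2 a N (fun n => c n t) i +
          QN3 a N (fun n => c n t) i + QN4 a N (fun n => c n t) i) t) ∧
    HasDerivAt (c N) (QN3 a N (fun n => c n t) N + QN4 a N (fun n => c n t) N) t

/-- Admissibility: `c` is a pointwise limit of nonnegative solutions of truncated
non-isolated systems with the same initial data (extended by zero above the truncation). -/
def AdmissibleNon (a : ℕ → ℕ → ℕ → ℝ) (c0 : ℕ → ℝ) (c : ℕ → ℝ → ℝ) : Prop :=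
  ∃ (Nm : ℕ → ℕ) (cN : ℕ → ℕ → ℝ → ℝ), StrictMono Nm ∧
    (∀ m, 2 ≤ Nm m) ∧
    (∀ m, IsTruncSolNon a (Nm m) (Set.Ici 0) (cN m)) ∧
    (∀ m, ∀ i, i ≤ Nm m → cN m i 0 = c0 i) ∧
    (∀ m, ∀ i, Nm m < i → ∀ t : ℝ, cN m i t = 0) ∧
    (∀ m, ∀ i, i ≤ Nm m → ∀ t : ℝ, 0 ≤ t → 0 ≤ cN m i t) ∧
    (∀ i : ℕ, ∀ t : ℝ, 0 ≤ t →
      Filter.Tendsto (fun m => cN m i t) Filter.atTop (nhds (c i t)))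


namespace DGEDaux


variable {Nf : ℕ → ℕ}

/-- slope function -/
def sig (Nf : ℕ → ℕ) (n : ℕ) : ℕ := ((Finset.range (n+1)).filter (fun m => Nf m ≤ n)).card

/-- convex weight -/
def gw (Nf : ℕ → ℕ) (n : ℕ) : ℕ := ∑ i ∈ Finset.range n, sig Nf i

section basic

variable (hN0 : Nf 0 = 0) (hgap : ∀ m, 4 * Nf m + 1 ≤ Nf (m+1))

section gaponly
include hgap

lemma Nf_strictMono : StrictMono Nf :=
  strictMono_nat_of_lt_succ (fun m => by have := hgap m; omega)

lemma Nf_le_apply (m : ℕ) : m ≤ Nf m := (Nf_strictMono hgap).le_apply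

lemma sig_eq_count {n K : ℕ} (hK : n + 1 ≤ K) :
    sig Nf n = ((Finset.range K).filter (fun m => Nf m ≤ n)).card := by
  unfold sig
  congr 1
  apply Finset.ext
  intro m
  simp only [Finset.mem_filter, Finset.mem_range]
  constructor
  · rintro ⟨hm, h⟩; exact ⟨lt_of_lt_of_le hm hK, h⟩
  · rintro ⟨hm, h⟩
    have := Nf_le_apply hgap m
    exact ⟨by omega, h⟩

lemma sig_ge {n L : ℕ} (h : Nf L ≤ n) : L + 1 ≤ sig Nf n := by
  rw [sig]
  have hsub : Finset.range (L+1) ⊆ (Finset.range (n+1)).filter (fun m => Nf m ≤ n) := by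
    intro m hm
    simp only [Finset.mem_range] at hm
    have h1 : Nf m ≤ Nf L := (Nf_strictMono hgap).monotone (by omega)
    have h2 : m ≤ Nf m := Nf_le_apply hgap m
    simp only [Finset.mem_filter, Finset.mem_range]
    omega
  calc L + 1 = (Finset.range (L+1)).card := by simp
  _ ≤ _ := Finset.card_le_card hsub

lemma sig_double_le (y : ℕ) : sig Nf (2*y) ≤ sig Nf (y/2) + 1 := by
  rw [sig, sig_eq_count hgap (show y/2 + 1 ≤ 2*y + 1 by omega)]
  set s := Finset.range (2*y+1) with hs
  have hsub : s.filter (fun m => Nf m ≤ 2*y) ⊆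
      s.filter (fun m => Nf m ≤ y/2) ∪ s.filter (fun m => y/2 < Nf m ∧ Nf m ≤ 2*y) := by
    intro m hm
    simp only [Finset.mem_filter, Finset.mem_union] at hm ⊢
    by_cases h : Nf m ≤ y/2
    · exact Or.inl ⟨hm.1, h⟩
    · exact Or.inr ⟨hm.1, by omega, hm.2⟩
  have hcard1 : (s.filter (fun m => y/2 < Nf m ∧ Nf m ≤ 2*y)).card ≤ 1 := by
    rw [Finset.card_le_one]
    intro m1 hm1 m2 hm2
    simp only [Finset.mem_filter] at hm1 hm2
    by_contra hne
    rcases Nat.lt_or_ge m1 m2 with hlt | hge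
    · have h1 : Nf (m1+1) ≤ Nf m2 := (Nf_strictMono hgap).monotone (by omega)
      have h2 := hgap m1
      omega
    · have hlt : m2 < m1 := by omega
      have h1 : Nf (m2+1) ≤ Nf m1 := (Nf_strictMono hgap).monotone (by omega)
      have h2 := hgap m2
      omega
  calc (s.filter (fun m => Nf m ≤ 2*y)).card
      ≤ (s.filter (fun m => Nf m ≤ y/2) ∪
          s.filter (fun m => y/2 < Nf m ∧ Nf m ≤ 2*y)).card := Finset.card_le_card hsub
    _ ≤ _ := by
        refine le_trans (Finset.card_union_le _ _) ?_
        omega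

end gaponly

include hN0

lemma sig_pos (n : ℕ) : 1 ≤ sig Nf n := by
  have : 0 ∈ (Finset.range (n+1)).filter (fun m => Nf m ≤ n) := by
    simp [hN0]
  simpa [sig] using Finset.card_pos.2 ⟨0, this⟩

omit hN0

lemma sig_mono : Monotone (sig Nf) := by
  apply monotone_nat_of_le_succ
  intro n
  unfold sig
  apply Finset.card_le_card
  intro m
  simp only [Finset.mem_filter, Finset.mem_range]
  rintro ⟨hm, h⟩
  exact ⟨by omega, by omega⟩

lemma gw_zero : gw Nf 0 = 0 := rfl

lemma gw_add (a b : ℕ) : gw Nf (a+b) = gw Nf a + ∑ i ∈ Finset.range b, sig Nf (a+i) := by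
  unfold gw
  rw [Finset.sum_range_add]

lemma gw_mono : Monotone (gw Nf) := by
  intro n n' h
  exact Finset.sum_le_sum_of_subset (Finset.range_subset_range.2 h)

lemma gw_superadd (a b : ℕ) : gw Nf a + gw Nf b ≤ gw Nf (a+b) := by
  rw [gw_add]
  have : gw Nf b ≤ ∑ i ∈ Finset.range b, sig Nf (a+i) :=
    Finset.sum_le_sum (fun i _ => sig_mono (Nat.le_add_left i a))
  omega

lemma gw_half_lb (y : ℕ) : (y - y/2) * sig Nf (y/2) ≤ gw Nf y := by
  have h1 : gw Nf y = gw Nf (y/2) + ∑ i ∈ Finset.range (y - y/2), sig Nf (y/2 + i) := by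
    rw [← gw_add]; congr 1; omega
  have h2 : (y - y/2) * sig Nf (y/2) ≤ ∑ i ∈ Finset.range (y - y/2), sig Nf (y/2 + i) := by
    calc (y - y/2) * sig Nf (y/2) = ∑ _i ∈ Finset.range (y - y/2), sig Nf (y/2) := by
          rw [Finset.sum_const, Finset.card_range, smul_eq_mul]
      _ ≤ _ := Finset.sum_le_sum (fun i _ => sig_mono (Nat.le_add_right _ i))
  omega

include hN0 hgap

lemma gw_sig_double (y : ℕ) : y * sig Nf (2*y) ≤ 4 * gw Nf y := by
  have ha := sig_double_le hgap y
  have hpos := sig_pos (Nf := Nf) hN0 (y/2)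
  have hb := gw_half_lb (Nf := Nf) y
  calc y * sig Nf (2*y) ≤ y * (2 * sig Nf (y/2)) := Nat.mul_le_mul_left y (by omega)
    _ ≤ (4*(y - y/2)) * sig Nf (y/2) := by
        rw [← Nat.mul_assoc]
        exact Nat.mul_le_mul_right _ (by omega)
    _ = 4 * ((y - y/2) * sig Nf (y/2)) := by ring
    _ ≤ 4 * gw Nf y := by omega

lemma gw_key {x y : ℕ} (hxy : x ≤ y) :
    y * gw Nf (x+y) ≤ y * gw Nf y + 4 * x * gw Nf y := by
  have h1 : gw Nf (x+y) ≤ gw Nf y + x * sig Nf (2*y) := by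
    rw [Nat.add_comm x y, gw_add]
    have : ∑ i ∈ Finset.range x, sig Nf (y+i) ≤ ∑ _i ∈ Finset.range x, sig Nf (2*y) :=
      Finset.sum_le_sum (fun i hi => sig_mono (by
        simp only [Finset.mem_range] at hi; omega))
    rw [Finset.sum_const, Finset.card_range, smul_eq_mul] at this
    omega
  have h2 := gw_sig_double hN0 hgap y
  calc y * gw Nf (x+y) ≤ y * (gw Nf y + x * sig Nf (2*y)) := Nat.mul_le_mul_left y h1
    _ = y * gw Nf y + x * (y * sig Nf (2*y)) := by ring
    _ ≤ y * gw Nf y + x * (4 * gw Nf y) := by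
        have := Nat.mul_le_mul_left x h2; omega
    _ = y * gw Nf y + 4 * x * gw Nf y := by ring

omit hgap in
lemma le_gw (n : ℕ) : n ≤ gw Nf n := by
  calc n = ∑ _i ∈ Finset.range n, 1 := by simp
    _ ≤ gw Nf n := Finset.sum_le_sum (fun i _ => sig_pos hN0 i)

omit hN0 hgap

lemma gw_div_mono {k p : ℕ} (hkp : k ≤ p) : p * gw Nf k ≤ k * gw Nf p := by
  induction p, hkp using Nat.le_induction with
  | base => rfl
  | succ p hkp ih =>
    have hstep : gw Nf (p+1) = gw Nf p + sig Nf p := by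
      have := gw_add (Nf := Nf) p 1; simpa using this
    have hgwk : gw Nf k ≤ k * sig Nf p := by
      calc gw Nf k = ∑ i ∈ Finset.range k, sig Nf i := rfl
        _ ≤ ∑ _i ∈ Finset.range k, sig Nf p :=
            Finset.sum_le_sum (fun i hi => sig_mono (by
              simp only [Finset.mem_range] at hi; omega))
        _ = k * sig Nf p := by rw [Finset.sum_const, Finset.card_range, smul_eq_mul]
    calc (p+1) * gw Nf k = p * gw Nf k + gw Nf k := by ring
      _ ≤ k * gw Nf p + k * sig Nf p := by omega
      _ = k * gw Nf (p+1) := by rw [hstep]; ring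

include hN0 hgap

omit hN0 in
lemma gw_tail_lb {L i : ℕ} (h : 2 * Nf L < i) : (L+1) * i ≤ 2 * gw Nf i := by
  have h2 : Nf L ≤ i/2 := by omega
  have hs : L+1 ≤ sig Nf (i/2) := sig_ge hgap h2
  have hb := gw_half_lb (Nf := Nf) i
  calc (L+1) * i ≤ sig Nf (i/2) * (2*(i - i/2)) := by
        have : i ≤ 2*(i - i/2) := by omega
        calc (L+1) * i ≤ sig Nf (i/2) * i := Nat.mul_le_mul_right i hs
          _ ≤ sig Nf (i/2) * (2*(i-i/2)) := Nat.mul_le_mul_left _ this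
    _ = 2 * ((i - i/2) * sig Nf (i/2)) := by ring
    _ ≤ 2 * gw Nf i := by omega

omit hN0

lemma gw_eq_sum {n K : ℕ} (hK : n ≤ K) :
    gw Nf n = ∑ m ∈ Finset.range K, (n - Nf m) := by
  have hsig : ∀ i, i < n → sig Nf i = ∑ m ∈ Finset.range K, (if Nf m ≤ i then 1 else 0) := by
    intro i hi
    rw [sig_eq_count hgap (show i + 1 ≤ K by omega), Finset.card_filter]
  calc gw Nf n = ∑ i ∈ Finset.range n, ∑ m ∈ Finset.range K, (if Nf m ≤ i then 1 else 0) := by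
        apply Finset.sum_congr rfl
        intro i hi
        exact hsig i (Finset.mem_range.1 hi)
    _ = ∑ m ∈ Finset.range K, ∑ i ∈ Finset.range n, (if Nf m ≤ i then 1 else 0) :=
        Finset.sum_comm
    _ = ∑ m ∈ Finset.range K, (n - Nf m) := by
        apply Finset.sum_congr rfl
        intro m _
        rw [← Finset.card_filter]
        have : (Finset.range n).filter (fun i => Nf m ≤ i) = Finset.Ico (Nf m) n := by
          apply Finset.ext; intro i
          simp only [Finset.mem_filter, Finset.mem_range, Finset.mem_Ico]
          omega
        rw [this, Nat.card_Ico]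

end basic


lemma sum_Icc_shift (f : ℕ → ℝ) (a b k : ℕ) :
    ∑ p ∈ Finset.Icc (a+k) (b+k), f p = ∑ i ∈ Finset.Icc a b, f (i+k) := by
  rw [← Finset.map_add_right_Icc, Finset.sum_map]
  simp [addRightEmbedding]

lemma star (A : ℕ → ℕ → ℕ → ℝ) (N : ℕ) (w : ℕ → ℝ) (hw0 : w 0 = 0) (d : ℕ → ℝ) :
    ∑ i ∈ Finset.Icc 1 N, w i * (QN1 A N d i + QN2 A N d i + QN3 A N d i + QN4 A N d i)
      = ∑ k ∈ Finset.Icc 1 N, ∑ p ∈ Finset.Icc k N, ∑ j ∈ Finset.Icc 0 (N-k),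
          (w (p-k) - w p + w (j+k) - w j) * (A p j k * d p * d j) := by
  have E1 : ∑ i ∈ Finset.Icc 1 N, w i * QN1 A N d i
      = ∑ k ∈ Finset.Icc 1 N, ∑ p ∈ Finset.Icc k N, ∑ j ∈ Finset.Icc 0 (N-k),
          w (p-k) * (A p j k * d p * d j) := by
    unfold QN1
    simp only [Finset.mul_sum]
    rw [Finset.sum_comm' (t' := Finset.Icc 1 N) (s' := fun k => Finset.Icc 1 (N-k))
      (by intro i k; simp only [Finset.mem_Icc]; omega)]
    apply Finset.sum_congr rfl
    intro k hk
    simp only [Finset.mem_Icc] at hk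
    have h1 : Finset.Icc k N = insert k (Finset.Icc (k+1) N) := by
      rw [Finset.Icc_add_one_left_eq_Ioc, Finset.Ioc_insert_left hk.2]
    rw [h1, Finset.sum_insert (by simp)]
    have h2 : ∑ j ∈ Finset.Icc 0 (N-k), w (k-k) * (A k j k * d k * d j) = 0 := by
      simp [Nat.sub_self, hw0]
    rw [h2, zero_add]
    have h3 : Finset.Icc (k+1) N = Finset.Icc (1+k) ((N-k)+k) := by
      congr 1; · omega
      · omega
    rw [h3, sum_Icc_shift]
    apply Finset.sum_congr rfl
    intro i _
    simp only [Nat.add_sub_cancel]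
  have E4 : ∑ i ∈ Finset.Icc 1 N, w i * QN4 A N d i
      = -∑ k ∈ Finset.Icc 1 N, ∑ p ∈ Finset.Icc k N, ∑ j ∈ Finset.Icc 0 (N-k),
          w p * (A p j k * d p * d j) := by
    have E4' : ∑ i ∈ Finset.Icc 1 N, ∑ k ∈ Finset.Icc 1 i, ∑ j ∈ Finset.Icc 0 (N-k),
        w i * (A i j k * d j * d i)
        = ∑ k ∈ Finset.Icc 1 N, ∑ p ∈ Finset.Icc k N, ∑ j ∈ Finset.Icc 0 (N-k),
          w p * (A p j k * d p * d j) := by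
      rw [Finset.sum_comm' (t' := Finset.Icc 1 N) (s' := fun k => Finset.Icc k N)
        (by intro i k; simp only [Finset.mem_Icc]; omega)]
      apply Finset.sum_congr rfl; intro k _
      apply Finset.sum_congr rfl; intro p _
      apply Finset.sum_congr rfl; intro j _
      ring
    unfold QN4
    simp only [mul_neg, Finset.mul_sum]
    rw [← E4']
    simp [Finset.sum_neg_distrib]
  have E2 : ∑ i ∈ Finset.Icc 1 N, w i * QN2 A N d i
      = -∑ k ∈ Finset.Icc 1 N, ∑ p ∈ Finset.Icc k N, ∑ j ∈ Finset.Icc 0 (N-k),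
          w j * (A p j k * d p * d j) := by
    have E2' : ∑ i ∈ Finset.Icc 1 N, ∑ k ∈ Finset.Icc 1 (N-i), ∑ j ∈ Finset.Icc k N,
        w i * (A j i k * d j * d i)
        = ∑ k ∈ Finset.Icc 1 N, ∑ p ∈ Finset.Icc k N, ∑ j ∈ Finset.Icc 0 (N-k),
          w j * (A p j k * d p * d j) := by
      rw [Finset.sum_comm' (t' := Finset.Icc 1 N) (s' := fun k => Finset.Icc 1 (N-k))
        (by intro i k; simp only [Finset.mem_Icc]; omega)]
      apply Finset.sum_congr rfl
      intro k _
      rw [Finset.sum_comm]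
      apply Finset.sum_congr rfl
      intro p _
      have h1 : Finset.Icc 0 (N-k) = insert 0 (Finset.Icc 1 (N-k)) := by
        rw [show Finset.Icc (1:ℕ) _ = Finset.Ioc 0 _ from Finset.Icc_add_one_left_eq_Ioc 0 _, Finset.Ioc_insert_left (Nat.zero_le _)]
      rw [h1, Finset.sum_insert (by simp)]
      rw [hw0]
      simp only [zero_mul, zero_add]
    unfold QN2
    simp only [mul_neg, Finset.mul_sum]
    rw [← E2']
    simp [Finset.sum_neg_distrib]
  have E3 : ∑ i ∈ Finset.Icc 1 N, w i * QN3 A N d i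
      = ∑ k ∈ Finset.Icc 1 N, ∑ p ∈ Finset.Icc k N, ∑ j ∈ Finset.Icc 0 (N-k),
          w (j+k) * (A p j k * d p * d j) := by
    unfold QN3
    simp only [Finset.mul_sum]
    rw [Finset.sum_comm' (t' := Finset.Icc 1 N) (s' := fun k => Finset.Icc k N)
      (by intro i k; simp only [Finset.mem_Icc]; omega)]
    apply Finset.sum_congr rfl
    intro k hk
    simp only [Finset.mem_Icc] at hk
    have h3 : Finset.Icc k N = Finset.Icc (0+k) ((N-k)+k) := by
      congr 1; · omega
      · omega
    rw [h3, sum_Icc_shift, Finset.sum_comm]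
    apply Finset.sum_congr rfl
    intro p _
    apply Finset.sum_congr rfl
    intro j _
    simp only [Nat.add_sub_cancel]
  have expand : ∀ i ∈ Finset.Icc 1 N,
      w i * (QN1 A N d i + QN2 A N d i + QN3 A N d i + QN4 A N d i)
        = w i * QN1 A N d i + w i * QN2 A N d i + w i * QN3 A N d i + w i * QN4 A N d i := by
    intro i _; ring
  rw [Finset.sum_congr rfl expand]
  simp only [Finset.sum_add_distrib]
  rw [E1, E2, E3, E4]
  have final : ∀ k ∈ Finset.Icc 1 N, ∀ p ∈ Finset.Icc k N, ∀ j ∈ Finset.Icc 0 (N-k),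
      (w (p-k) - w p + w (j+k) - w j) * (A p j k * d p * d j)
        = w (p-k) * (A p j k * d p * d j) - w p * (A p j k * d p * d j)
          + w (j+k) * (A p j k * d p * d j) - w j * (A p j k * d p * d j) := by
    intro _ _ _ _ _ _; ring
  have : ∑ k ∈ Finset.Icc 1 N, ∑ p ∈ Finset.Icc k N, ∑ j ∈ Finset.Icc 0 (N-k),
      (w (p-k) - w p + w (j+k) - w j) * (A p j k * d p * d j)
      = ∑ k ∈ Finset.Icc 1 N, ∑ p ∈ Finset.Icc k N, ∑ j ∈ Finset.Icc 0 (N-k),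
        (w (p-k) * (A p j k * d p * d j) - w p * (A p j k * d p * d j)
          + w (j+k) * (A p j k * d p * d j) - w j * (A p j k * d p * d j)) := by
    apply Finset.sum_congr rfl; intro k hk
    apply Finset.sum_congr rfl; intro p hp
    apply Finset.sum_congr rfl; intro j hj
    exact final k hk p hp j hj
  rw [this]
  simp only [Finset.sum_add_distrib, Finset.sum_sub_distrib]
  ring


lemma perterm (hN0 : Nf 0 = 0) (hgap : ∀ m, 4 * Nf m + 1 ≤ Nf (m+1)) (a : ℕ → ℕ → ℕ → ℝ) (C : ℝ) (q : ℕ → ℕ → ℝ)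
    (ha : ∀ i j k, 0 ≤ a i j k) (hC : 1 ≤ C) (hq0 : ∀ i k, 0 ≤ q i k)
    (hGBb : ∀ i j k : ℕ, 1 ≤ k → k ≤ i → 1 ≤ j →
      a i j k ≤ C * ((i : ℝ) - k + 1) * ((j : ℝ) + k) * q i k)
    {p j k : ℕ} (hk : 1 ≤ k) (hkp : k ≤ p) :
    ((gw Nf (p-k) : ℝ) - gw Nf p + gw Nf (j+k) - gw Nf j) * a p j k
      ≤ 8*C * ((k:ℝ) * ((p:ℝ) - (k:ℝ) + 1) * q p k)
          * ((gw Nf j : ℝ) + (j:ℝ) * (gw Nf p : ℝ) / (p:ℝ)) := by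
  have hp1 : 1 ≤ p := le_trans hk hkp
  have hp0 : (0:ℝ) < (p:ℝ) := by exact_mod_cast hp1
  have hkR : (1:ℝ) ≤ (k:ℝ) := by exact_mod_cast hk
  have hkpR : (k:ℝ) ≤ (p:ℝ) := by exact_mod_cast hkp
  have hpk1 : (1:ℝ) ≤ (p:ℝ) - (k:ℝ) + 1 := by linarith
  have hq := hq0 p k
  have hC0 : (0:ℝ) < C := lt_of_lt_of_le one_pos hC
  have hgwp : (0:ℝ) ≤ (gw Nf p : ℝ) := by positivity
  have hgwj : (0:ℝ) ≤ (gw Nf j : ℝ) := by positivity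
  have hKnn : (0:ℝ) ≤ (k:ℝ) * ((p:ℝ) - (k:ℝ) + 1) * q p k := by
    apply mul_nonneg (mul_nonneg (by positivity) (by linarith)) hq
  have hRHS : (0:ℝ) ≤ 8*C * ((k:ℝ) * ((p:ℝ) - (k:ℝ) + 1) * q p k)
      * ((gw Nf j : ℝ) + (j:ℝ) * (gw Nf p : ℝ) / (p:ℝ)) := by
    apply mul_nonneg (mul_nonneg (by positivity) hKnn)
    have : (0:ℝ) ≤ (j:ℝ) * (gw Nf p : ℝ) / (p:ℝ) := by positivity
    linarith
  rcases Nat.eq_zero_or_pos j with hj0 | hj1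
  · -- j = 0 : the integrand is nonpositive
    subst hj0
    have hsup : gw Nf (p-k) + gw Nf k ≤ gw Nf p := by
      have := gw_superadd (Nf := Nf) (p-k) k
      rwa [Nat.sub_add_cancel hkp] at this
    have hphi : ((gw Nf (p-k) : ℝ) - gw Nf p + gw Nf (0+k) - gw Nf 0) ≤ 0 := by
      rw [Nat.zero_add, gw_zero]
      push_cast
      have : ((gw Nf (p-k) : ℝ) + gw Nf k) ≤ (gw Nf p : ℝ) := by exact_mod_cast hsup
      push_cast at this
      linarith
    exact le_trans (mul_nonpos_of_nonpos_of_nonneg hphi (ha p 0 k)) hRHS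
  · have hjR : (1:ℝ) ≤ (j:ℝ) := by exact_mod_cast hj1
    have hj0R : (0:ℝ) < (j:ℝ) := by linarith
    have hab := hGBb p j k hk hkp hj1
    have hannl := ha p j k
    set Φ : ℝ := ((gw Nf (p-k) : ℝ) - gw Nf p + gw Nf (j+k) - gw Nf j) with hΦ
    rcases le_or_gt k j with hkj | hjk
    · -- case k ≤ j : multiply through by j
      have hkjR : (k:ℝ) ≤ (j:ℝ) := by exact_mod_cast hkj
      -- j * Φ ≤ 4 k gw j
      have h1 : (j:ℝ) * Φ ≤ 4*(k:ℝ)*(gw Nf j : ℝ) := by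
        have hkey : (j:ℕ) * gw Nf (k+j) ≤ j * gw Nf j + 4 * k * gw Nf j :=
          gw_key (Nf := Nf) hN0 hgap hkj
        have hkeyR : (j:ℝ) * (gw Nf (k+j) : ℝ)
            ≤ (j:ℝ) * (gw Nf j : ℝ) + 4 * (k:ℝ) * (gw Nf j : ℝ) := by exact_mod_cast hkey
        have hmono : (gw Nf (p-k) : ℝ) ≤ (gw Nf p : ℝ) := by
          exact_mod_cast gw_mono (Nf := Nf) (Nat.sub_le p k)
        have hcomm : (gw Nf (j+k) : ℝ) = (gw Nf (k+j) : ℝ) := by rw [Nat.add_comm]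
        have hΦle : Φ ≤ (gw Nf (j+k) : ℝ) - (gw Nf j : ℝ) := by
          rw [hΦ]; linarith
        calc (j:ℝ) * Φ ≤ (j:ℝ) * ((gw Nf (j+k) : ℝ) - (gw Nf j : ℝ)) := by
              apply mul_le_mul_of_nonneg_left hΦle (by positivity)
          _ ≤ 4*(k:ℝ)*(gw Nf j : ℝ) := by rw [hcomm]; ring_nf; ring_nf at hkeyR; linarith
      -- conclude
      have h2 : (j:ℝ) * (Φ * a p j k) ≤ (4*(k:ℝ)*(gw Nf j : ℝ)) * a p j k := by
        rw [← mul_assoc]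
        exact mul_le_mul_of_nonneg_right h1 hannl
      have h3 : (4*(k:ℝ)*(gw Nf j : ℝ)) * a p j k
          ≤ (4*(k:ℝ)*(gw Nf j : ℝ)) * (C * ((p:ℝ) - k + 1) * ((j:ℝ) + k) * q p k) := by
        apply mul_le_mul_of_nonneg_left hab (by positivity)
      have h4 : (4*(k:ℝ)*(gw Nf j : ℝ)) * (C * ((p:ℝ) - k + 1) * ((j:ℝ) + k) * q p k)
          ≤ (j:ℝ) * (8*C * ((k:ℝ) * ((p:ℝ) - (k:ℝ) + 1) * q p k)
              * ((gw Nf j : ℝ) + (j:ℝ) * (gw Nf p : ℝ) / (p:ℝ))) := by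
        have hjk2 : (j:ℝ) + k ≤ 2*(j:ℝ) := by linarith
        have e1 : (4*(k:ℝ)*(gw Nf j : ℝ)) * (C * ((p:ℝ) - k + 1) * ((j:ℝ) + k) * q p k)
            ≤ (4*(k:ℝ)*(gw Nf j : ℝ)) * (C * ((p:ℝ) - k + 1) * (2*(j:ℝ)) * q p k) := by
          apply mul_le_mul_of_nonneg_left _ (by positivity)
          apply mul_le_mul_of_nonneg_right _ hq
          apply mul_le_mul_of_nonneg_left hjk2 (by positivity)
        have e2 : (4*(k:ℝ)*(gw Nf j : ℝ)) * (C * ((p:ℝ) - k + 1) * (2*(j:ℝ)) * q p k)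
            = (j:ℝ) * (8*C * ((k:ℝ) * ((p:ℝ) - (k:ℝ) + 1) * q p k) * (gw Nf j : ℝ)) := by
          ring
        have e3 : (j:ℝ) * (8*C * ((k:ℝ) * ((p:ℝ) - (k:ℝ) + 1) * q p k) * (gw Nf j : ℝ))
            ≤ (j:ℝ) * (8*C * ((k:ℝ) * ((p:ℝ) - (k:ℝ) + 1) * q p k)
              * ((gw Nf j : ℝ) + (j:ℝ) * (gw Nf p : ℝ) / (p:ℝ))) := by
          apply mul_le_mul_of_nonneg_left _ (by positivity)
          apply mul_le_mul_of_nonneg_left _ (mul_nonneg (by positivity) hKnn)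
          have : (0:ℝ) ≤ (j:ℝ) * (gw Nf p : ℝ) / (p:ℝ) := by positivity
          linarith
        linarith
      have := le_trans h2 (le_trans h3 h4)
      exact le_of_mul_le_mul_left this hj0R
    · -- case j < k : multiply through by p
      have hjkR : (j:ℝ) < (k:ℝ) := by exact_mod_cast hjk
      have hk0R : (0:ℝ) < (k:ℝ) := by linarith
      have h1 : (p:ℝ) * Φ ≤ 4*(j:ℝ)*(gw Nf p : ℝ) := by
        have hkey : (k:ℕ) * gw Nf (j+k) ≤ k * gw Nf k + 4 * j * gw Nf k :=
          gw_key (Nf := Nf) hN0 hgap (le_of_lt hjk)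
        have hkeyR : (k:ℝ) * (gw Nf (j+k) : ℝ)
            ≤ (k:ℝ) * (gw Nf k : ℝ) + 4 * (j:ℝ) * (gw Nf k : ℝ) := by exact_mod_cast hkey
        have hdiv : (p:ℝ) * (gw Nf k : ℝ) ≤ (k:ℝ) * (gw Nf p : ℝ) := by
          exact_mod_cast gw_div_mono (Nf := Nf) hkp
        have hsup : (gw Nf (p-k) : ℝ) + (gw Nf k : ℝ) ≤ (gw Nf p : ℝ) := by
          have := gw_superadd (Nf := Nf) (p-k) k
          rw [Nat.sub_add_cancel hkp] at this
          exact_mod_cast this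
        have hΦle : Φ ≤ (gw Nf (j+k) : ℝ) - (gw Nf k : ℝ) := by
          rw [hΦ]
          have : (0:ℝ) ≤ (gw Nf j : ℝ) := hgwj
          linarith
        -- k * (gw(j+k) - gw k) ≤ 4 j gw k  and  p gw k ≤ k gw p
        -- so  p * k * (gw(j+k) - gw k) ≤ 4 j p gw k ≤ 4 j k gw p
        have h2 : (p:ℝ) * ((k:ℝ) * ((gw Nf (j+k) : ℝ) - (gw Nf k : ℝ)))
            ≤ (p:ℝ) * (4*(j:ℝ)*(gw Nf k : ℝ)) := by
          apply mul_le_mul_of_nonneg_left _ (le_of_lt hp0)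
          linarith
        have h3 : (p:ℝ) * (4*(j:ℝ)*(gw Nf k : ℝ)) ≤ (k:ℝ) * (4*(j:ℝ)*(gw Nf p : ℝ)) := by
          have : 4*(j:ℝ) * ((p:ℝ) * (gw Nf k : ℝ)) ≤ 4*(j:ℝ) * ((k:ℝ) * (gw Nf p : ℝ)) := by
            apply mul_le_mul_of_nonneg_left hdiv (by positivity)
          linarith [this]
        have h4 : (p:ℝ) * ((k:ℝ) * Φ) ≤ (k:ℝ) * (4*(j:ℝ)*(gw Nf p : ℝ)) := by
          calc (p:ℝ) * ((k:ℝ) * Φ) ≤ (p:ℝ) * ((k:ℝ) * ((gw Nf (j+k) : ℝ) - (gw Nf k : ℝ))) := by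
                apply mul_le_mul_of_nonneg_left _ (le_of_lt hp0)
                apply mul_le_mul_of_nonneg_left hΦle (le_of_lt hk0R)
            _ ≤ (p:ℝ) * (4*(j:ℝ)*(gw Nf k : ℝ)) := h2
            _ ≤ (k:ℝ) * (4*(j:ℝ)*(gw Nf p : ℝ)) := h3
        have h5 : (k:ℝ) * ((p:ℝ) * Φ) ≤ (k:ℝ) * (4*(j:ℝ)*(gw Nf p : ℝ)) := by
          calc (k:ℝ) * ((p:ℝ) * Φ) = (p:ℝ) * ((k:ℝ) * Φ) := by ring
            _ ≤ _ := h4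
        exact le_of_mul_le_mul_left h5 hk0R
      have h2 : (p:ℝ) * (Φ * a p j k) ≤ (4*(j:ℝ)*(gw Nf p : ℝ)) * a p j k := by
        rw [← mul_assoc]
        exact mul_le_mul_of_nonneg_right h1 hannl
      have h3 : (4*(j:ℝ)*(gw Nf p : ℝ)) * a p j k
          ≤ (4*(j:ℝ)*(gw Nf p : ℝ)) * (C * ((p:ℝ) - k + 1) * ((j:ℝ) + k) * q p k) := by
        apply mul_le_mul_of_nonneg_left hab (by positivity)
      have h4 : (4*(j:ℝ)*(gw Nf p : ℝ)) * (C * ((p:ℝ) - k + 1) * ((j:ℝ) + k) * q p k)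
          ≤ (p:ℝ) * (8*C * ((k:ℝ) * ((p:ℝ) - (k:ℝ) + 1) * q p k)
              * ((gw Nf j : ℝ) + (j:ℝ) * (gw Nf p : ℝ) / (p:ℝ))) := by
        have hjk2 : (j:ℝ) + k ≤ 2*(k:ℝ) := by linarith
        have e1 : (4*(j:ℝ)*(gw Nf p : ℝ)) * (C * ((p:ℝ) - k + 1) * ((j:ℝ) + k) * q p k)
            ≤ (4*(j:ℝ)*(gw Nf p : ℝ)) * (C * ((p:ℝ) - k + 1) * (2*(k:ℝ)) * q p k) := by
          apply mul_le_mul_of_nonneg_left _ (by positivity)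
          apply mul_le_mul_of_nonneg_right _ hq
          apply mul_le_mul_of_nonneg_left hjk2 (by positivity)
        have e2 : (4*(j:ℝ)*(gw Nf p : ℝ)) * (C * ((p:ℝ) - k + 1) * (2*(k:ℝ)) * q p k)
            = (p:ℝ) * (8*C * ((k:ℝ) * ((p:ℝ) - (k:ℝ) + 1) * q p k)
                * ((j:ℝ) * (gw Nf p : ℝ) / (p:ℝ))) := by
          field_simp
          ring
        have e3 : (p:ℝ) * (8*C * ((k:ℝ) * ((p:ℝ) - (k:ℝ) + 1) * q p k)
                * ((j:ℝ) * (gw Nf p : ℝ) / (p:ℝ)))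
            ≤ (p:ℝ) * (8*C * ((k:ℝ) * ((p:ℝ) - (k:ℝ) + 1) * q p k)
              * ((gw Nf j : ℝ) + (j:ℝ) * (gw Nf p : ℝ) / (p:ℝ))) := by
          apply mul_le_mul_of_nonneg_left _ (le_of_lt hp0)
          apply mul_le_mul_of_nonneg_left _ (mul_nonneg (by positivity) hKnn)
          linarith
        linarith
      have := le_trans h2 (le_trans h3 h4)
      exact le_of_mul_le_mul_left this hp0


lemma Dsum_bound (hN0 : Nf 0 = 0) (hgap : ∀ m, 4 * Nf m + 1 ≤ Nf (m+1))
    (a : ℕ → ℕ → ℕ → ℝ) (C Q : ℝ) (q : ℕ → ℕ → ℝ)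
    (ha : ∀ i j k, 0 ≤ a i j k)
    (hGBb : ∀ i j k : ℕ, 1 ≤ k → k ≤ i → 1 ≤ j →
      a i j k ≤ C * ((i : ℝ) - k + 1) * ((j : ℝ) + k) * q i k)
    (hC : 1 ≤ C) (hq0 : ∀ i k, 0 ≤ q i k)
    (hqsum : ∀ i : ℕ, 1 ≤ i → ∑ k ∈ Finset.Icc 1 i, (k:ℝ)*((i:ℝ)-(k:ℝ)+1)*q i k ≤ Q*(i:ℝ))
    (N : ℕ) (d : ℕ → ℝ) (hd : ∀ i, 0 ≤ d i) :
    ∑ k ∈ Finset.Icc 1 N, ∑ p ∈ Finset.Icc k N, ∑ j ∈ Finset.Icc 0 (N-k),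
        ((gw Nf (p-k) : ℝ) - gw Nf p + gw Nf (j+k) - gw Nf j) * (a p j k * d p * d j)
      ≤ 16*C*Q * (∑ i ∈ Finset.Icc 1 N, (i:ℝ) * d i)
          * (∑ i ∈ Finset.Icc 1 N, (gw Nf i : ℝ) * d i) := by
  have hC0 : (0:ℝ) < C := lt_of_lt_of_le one_pos hC
  set M1 := ∑ i ∈ Finset.Icc 1 N, (i:ℝ) * d i with hM1def
  set G := ∑ i ∈ Finset.Icc 1 N, (gw Nf i : ℝ) * d i with hGdef
  have hM1 : 0 ≤ M1 := Finset.sum_nonneg (fun i _ => mul_nonneg (by positivity) (hd i))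
  have hG : 0 ≤ G := Finset.sum_nonneg (fun i _ => mul_nonneg (by positivity) (hd i))
  have hrest : ∀ p : ℕ, 1 ≤ p → 0 ≤ G + (gw Nf p : ℝ) * M1 / (p:ℝ) := by
    intro p hp
    have : (0:ℝ) < (p:ℝ) := by exact_mod_cast hp
    have h2 : 0 ≤ (gw Nf p : ℝ) * M1 / (p:ℝ) := by positivity
    linarith
  -- j-sum over the full box equals G / M1
  have hGfull : ∑ j ∈ Finset.Icc 0 N, (gw Nf j : ℝ) * d j = G := by
    have h1 : Finset.Icc 0 N = insert 0 (Finset.Icc 1 N) := by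
      rw [show Finset.Icc (1:ℕ) _ = Finset.Ioc 0 _ from Finset.Icc_add_one_left_eq_Ioc 0 _, Finset.Ioc_insert_left (Nat.zero_le _)]
    rw [h1, Finset.sum_insert (by simp), gw_zero]
    simp
    rfl
  have hMfull : ∑ j ∈ Finset.Icc 0 N, (j:ℝ) * d j = M1 := by
    have h1 : Finset.Icc 0 N = insert 0 (Finset.Icc 1 N) := by
      rw [show Finset.Icc (1:ℕ) _ = Finset.Ioc 0 _ from Finset.Icc_add_one_left_eq_Ioc 0 _, Finset.Ioc_insert_left (Nat.zero_le _)]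
    rw [h1, Finset.sum_insert (by simp)]
    simp
    rfl
  -- Step A : bound the inner j-sum for fixed k ≤ p
  have stepA : ∀ k ∈ Finset.Icc 1 N, ∀ p ∈ Finset.Icc k N,
      ∑ j ∈ Finset.Icc 0 (N-k),
        ((gw Nf (p-k) : ℝ) - gw Nf p + gw Nf (j+k) - gw Nf j) * (a p j k * d p * d j)
      ≤ ((k:ℝ)*((p:ℝ)-(k:ℝ)+1)*q p k) * (8*C*(d p * (G + (gw Nf p : ℝ) * M1 / (p:ℝ)))) := by
    intro k hkmem p hpmem
    simp only [Finset.mem_Icc] at hkmem hpmem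
    have hk : 1 ≤ k := hkmem.1
    have hkp : k ≤ p := hpmem.1
    have hp1 : 1 ≤ p := le_trans hk hkp
    have hpR : (0:ℝ) < (p:ℝ) := by exact_mod_cast hp1
    have t1 : ∑ j ∈ Finset.Icc 0 (N-k),
        ((gw Nf (p-k) : ℝ) - gw Nf p + gw Nf (j+k) - gw Nf j) * (a p j k * d p * d j)
        ≤ ∑ j ∈ Finset.Icc 0 (N-k),
          8*C * ((k:ℝ) * ((p:ℝ) - (k:ℝ) + 1) * q p k)
            * ((gw Nf j : ℝ) + (j:ℝ) * (gw Nf p : ℝ) / (p:ℝ)) * (d p * d j) := by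
      apply Finset.sum_le_sum
      intro j _
      have hper := perterm (Nf := Nf) hN0 hgap a C q ha hC hq0 hGBb (p := p) (j := j) (k := k) hk hkp
      have hdd : 0 ≤ d p * d j := mul_nonneg (hd p) (hd j)
      calc ((gw Nf (p-k) : ℝ) - gw Nf p + gw Nf (j+k) - gw Nf j) * (a p j k * d p * d j)
          = (((gw Nf (p-k) : ℝ) - gw Nf p + gw Nf (j+k) - gw Nf j) * a p j k) * (d p * d j) := by
            ring
        _ ≤ (8*C * ((k:ℝ) * ((p:ℝ) - (k:ℝ) + 1) * q p k)
            * ((gw Nf j : ℝ) + (j:ℝ) * (gw Nf p : ℝ) / (p:ℝ))) * (d p * d j) :=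
            mul_le_mul_of_nonneg_right hper hdd
    have tnonneg : ∀ j : ℕ, 0 ≤ 8*C * ((k:ℝ) * ((p:ℝ) - (k:ℝ) + 1) * q p k)
        * ((gw Nf j : ℝ) + (j:ℝ) * (gw Nf p : ℝ) / (p:ℝ)) * (d p * d j) := by
      intro j
      have h1 : (0:ℝ) ≤ (k:ℝ) * ((p:ℝ) - (k:ℝ) + 1) * q p k := by
        have : (k:ℝ) ≤ (p:ℝ) := by exact_mod_cast hkp
        apply mul_nonneg (mul_nonneg (by positivity) (by linarith)) (hq0 p k)
      have h2 : (0:ℝ) ≤ (gw Nf j : ℝ) + (j:ℝ) * (gw Nf p : ℝ) / (p:ℝ) := by positivity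
      have h3 : 0 ≤ d p * d j := mul_nonneg (hd p) (hd j)
      apply mul_nonneg (mul_nonneg (mul_nonneg (by positivity) h1) h2) h3
    have t2 : ∑ j ∈ Finset.Icc 0 (N-k),
          8*C * ((k:ℝ) * ((p:ℝ) - (k:ℝ) + 1) * q p k)
            * ((gw Nf j : ℝ) + (j:ℝ) * (gw Nf p : ℝ) / (p:ℝ)) * (d p * d j)
        ≤ ∑ j ∈ Finset.Icc 0 N,
          8*C * ((k:ℝ) * ((p:ℝ) - (k:ℝ) + 1) * q p k)
            * ((gw Nf j : ℝ) + (j:ℝ) * (gw Nf p : ℝ) / (p:ℝ)) * (d p * d j) := by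
      apply Finset.sum_le_sum_of_subset_of_nonneg
      · apply Finset.Icc_subset_Icc_right; omega
      · intro j _ _; exact tnonneg j
    have t3 : ∑ j ∈ Finset.Icc 0 N,
          8*C * ((k:ℝ) * ((p:ℝ) - (k:ℝ) + 1) * q p k)
            * ((gw Nf j : ℝ) + (j:ℝ) * (gw Nf p : ℝ) / (p:ℝ)) * (d p * d j)
        = ((k:ℝ)*((p:ℝ)-(k:ℝ)+1)*q p k) * (8*C*(d p * (G + (gw Nf p : ℝ) * M1 / (p:ℝ)))) := by
      have expand : ∀ j ∈ Finset.Icc 0 N,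
          8*C * ((k:ℝ) * ((p:ℝ) - (k:ℝ) + 1) * q p k)
            * ((gw Nf j : ℝ) + (j:ℝ) * (gw Nf p : ℝ) / (p:ℝ)) * (d p * d j)
          = (8*C * ((k:ℝ) * ((p:ℝ) - (k:ℝ) + 1) * q p k) * d p) * ((gw Nf j : ℝ) * d j)
            + (8*C * ((k:ℝ) * ((p:ℝ) - (k:ℝ) + 1) * q p k) * d p * (gw Nf p : ℝ) / (p:ℝ))
              * ((j:ℝ) * d j) := by
        intro j _; ring
      rw [Finset.sum_congr rfl expand, Finset.sum_add_distrib, ← Finset.mul_sum, ← Finset.mul_sum,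
        hGfull, hMfull]
      field_simp
    calc _ ≤ _ := t1
      _ ≤ _ := t2
      _ = _ := t3
  -- assemble
  have step1 : ∑ k ∈ Finset.Icc 1 N, ∑ p ∈ Finset.Icc k N, ∑ j ∈ Finset.Icc 0 (N-k),
      ((gw Nf (p-k) : ℝ) - gw Nf p + gw Nf (j+k) - gw Nf j) * (a p j k * d p * d j)
      ≤ ∑ k ∈ Finset.Icc 1 N, ∑ p ∈ Finset.Icc k N,
        ((k:ℝ)*((p:ℝ)-(k:ℝ)+1)*q p k) * (8*C*(d p * (G + (gw Nf p : ℝ) * M1 / (p:ℝ)))) := by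
    apply Finset.sum_le_sum
    intro k hk
    apply Finset.sum_le_sum
    intro p hp
    exact stepA k hk p hp
  have step2 : ∑ k ∈ Finset.Icc 1 N, ∑ p ∈ Finset.Icc k N,
      ((k:ℝ)*((p:ℝ)-(k:ℝ)+1)*q p k) * (8*C*(d p * (G + (gw Nf p : ℝ) * M1 / (p:ℝ))))
      = ∑ p ∈ Finset.Icc 1 N, ∑ k ∈ Finset.Icc 1 p,
        ((k:ℝ)*((p:ℝ)-(k:ℝ)+1)*q p k) * (8*C*(d p * (G + (gw Nf p : ℝ) * M1 / (p:ℝ)))) := by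
    rw [Finset.sum_comm' (t' := Finset.Icc 1 N) (s' := fun p => Finset.Icc 1 p)
      (by intro k p; simp only [Finset.mem_Icc]; omega)]
  have step3 : ∑ p ∈ Finset.Icc 1 N, ∑ k ∈ Finset.Icc 1 p,
      ((k:ℝ)*((p:ℝ)-(k:ℝ)+1)*q p k) * (8*C*(d p * (G + (gw Nf p : ℝ) * M1 / (p:ℝ))))
      ≤ ∑ p ∈ Finset.Icc 1 N,
        (8*C*Q*(((p:ℝ) * d p) * G) + 8*C*Q*(((gw Nf p : ℝ) * d p) * M1)) := by
    apply Finset.sum_le_sum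
    intro p hp
    simp only [Finset.mem_Icc] at hp
    have hp1 : 1 ≤ p := hp.1
    have hpR : (0:ℝ) < (p:ℝ) := by exact_mod_cast hp1
    have hfac : ∑ k ∈ Finset.Icc 1 p,
        ((k:ℝ)*((p:ℝ)-(k:ℝ)+1)*q p k) * (8*C*(d p * (G + (gw Nf p : ℝ) * M1 / (p:ℝ))))
        = (∑ k ∈ Finset.Icc 1 p, (k:ℝ)*((p:ℝ)-(k:ℝ)+1)*q p k)
          * (8*C*(d p * (G + (gw Nf p : ℝ) * M1 / (p:ℝ)))) := by
      rw [Finset.sum_mul]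
    rw [hfac]
    have hrnn : 0 ≤ 8*C*(d p * (G + (gw Nf p : ℝ) * M1 / (p:ℝ))) := by
      apply mul_nonneg (by positivity) (mul_nonneg (hd p) (hrest p hp1))
    have := mul_le_mul_of_nonneg_right (hqsum p hp1) hrnn
    calc (∑ k ∈ Finset.Icc 1 p, (k:ℝ)*((p:ℝ)-(k:ℝ)+1)*q p k)
          * (8*C*(d p * (G + (gw Nf p : ℝ) * M1 / (p:ℝ))))
        ≤ (Q*(p:ℝ)) * (8*C*(d p * (G + (gw Nf p : ℝ) * M1 / (p:ℝ)))) := this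
      _ = 8*C*Q*(((p:ℝ) * d p) * G) + 8*C*Q*(((gw Nf p : ℝ) * d p) * M1) := by
          field_simp
  have step4 : ∑ p ∈ Finset.Icc 1 N,
      (8*C*Q*(((p:ℝ) * d p) * G) + 8*C*Q*(((gw Nf p : ℝ) * d p) * M1))
      = 16*C*Q*M1*G := by
    rw [Finset.sum_add_distrib]
    have e1 : ∑ p ∈ Finset.Icc 1 N, 8*C*Q*(((p:ℝ) * d p) * G)
        = 8*C*Q*G*M1 := by
      rw [hM1def, Finset.mul_sum]
      apply Finset.sum_congr rfl
      intro p _; ring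
    have e2 : ∑ p ∈ Finset.Icc 1 N, 8*C*Q*(((gw Nf p : ℝ) * d p) * M1)
        = 8*C*Q*M1*G := by
      rw [hGdef, Finset.mul_sum]
      apply Finset.sum_congr rfl
      intro p _; ring
    rw [e1, e2]; ring
  calc _ ≤ _ := step1
    _ = _ := step2
    _ ≤ _ := step3
    _ = 16*C*Q*M1*G := step4
    _ = 16*C*Q * M1 * G := by ring


end DGEDaux

/-- Theorem 5.4: admissible solutions of the non-isolated DGED system conserve the
total mass. -/
theorem admissible_nonisolated_mass_conservation
    (a : ℕ → ℕ → ℕ → ℝ) (ha : ∀ i j k, 0 ≤ a i j k)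
    (hzero : ∀ p : ℕ, 1 ≤ p → a p 0 p = 0)
    (C Q : ℝ) (q : ℕ → ℕ → ℝ) (hGB : GB a C Q q)
    (c0 : ℕ → ℝ) (hc0 : ∀ i, 0 ≤ c0 i)
    (hX : Summable (fun i : ℕ => (1 + (i : ℝ)) * c0 i))
    (c : ℕ → ℝ → ℝ) (hc : MildSolNon a c0 (Set.Ici 0) c)
    (hadm : AdmissibleNon a c0 c) :
    ∀ t : ℝ, 0 ≤ t → (∑' i : ℕ, (i : ℝ) * c i t) = (∑' i : ℕ, (i : ℝ) * c0 i) := by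
  classical
  intro t ht
  obtain ⟨hC, hQ, hq0, hqsum, hGBb⟩ := hGB
  obtain ⟨Nm, cN, hNmmono, hNm2, hTrunc, hinit, hhigh, hposN, hlim⟩ := hadm
  have hC0 : (0:ℝ) < C := lt_of_lt_of_le one_pos hC
  have hQ0 : (0:ℝ) < Q := lt_of_lt_of_le one_pos hQ
  -- summability of the mass series at time 0
  have hf0nn : ∀ i : ℕ, 0 ≤ (i:ℝ) * c0 i := fun i => mul_nonneg (by positivity) (hc0 i)
  have hsum0 : Summable (fun i : ℕ => (i:ℝ) * c0 i) := by
    apply Summable.of_nonneg_of_le hf0nn _ hX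
    intro i
    have := hc0 i
    nlinarith [Nat.cast_nonneg (α := ℝ) i]
  set ρ := ∑' i : ℕ, (i:ℝ) * c0 i with hρdef
  have hρnn : 0 ≤ ρ := tsum_nonneg hf0nn
  -- the tail of the initial mass
  set Tl : ℕ → ℝ := fun r => ∑' i : ℕ, (if r ≤ i then (i:ℝ) * c0 i else 0) with hTldef
  have hTlsummand : ∀ r : ℕ, Summable (fun i : ℕ => if r ≤ i then (i:ℝ)*c0 i else 0) := by
    intro r
    apply Summable.of_nonneg_of_le _ _ hsum0
    · intro i; split_ifs; · exact hf0nn i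
      · exact le_refl 0
    · intro i; split_ifs; · exact le_refl _
      · exact hf0nn i
  have hTl_le : ∀ r, Tl r ≤ ρ := by
    intro r
    apply Summable.tsum_le_tsum _ (hTlsummand r) hsum0
    intro i; split_ifs; · exact le_refl _
    · exact hf0nn i
  have hTl_eq : ∀ r : ℕ, Tl r = ρ - ∑ i ∈ Finset.range r, (i:ℝ)*c0 i := by
    intro r
    have hsplit : ∀ i : ℕ, (if r ≤ i then (i:ℝ)*c0 i else 0) + (if r ≤ i then 0 else (i:ℝ)*c0 i)
        = (i:ℝ)*c0 i := by
      intro i; split_ifs <;> simp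
    have hs2 : Summable (fun i : ℕ => if r ≤ i then (0:ℝ) else (i:ℝ)*c0 i) := by
      apply summable_of_finite_support
      apply Set.Finite.subset (Set.finite_Iio r)
      intro i hi
      simp only [Function.mem_support] at hi
      by_contra hcon
      simp only [Set.mem_Iio, not_lt] at hcon
      rw [if_pos hcon] at hi
      exact hi rfl
    have h1 : Tl r + ∑' i : ℕ, (if r ≤ i then (0:ℝ) else (i:ℝ)*c0 i) = ρ := by
      rw [hTldef, hρdef, ← Summable.tsum_add (hTlsummand r) hs2]
      exact tsum_congr hsplit
    have h2 : ∑' i : ℕ, (if r ≤ i then (0:ℝ) else (i:ℝ)*c0 i)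
        = ∑ i ∈ Finset.range r, (i:ℝ)*c0 i := by
      rw [tsum_eq_sum (s := Finset.range r)]
      · apply Finset.sum_congr rfl
        intro i hi
        simp only [Finset.mem_range] at hi
        rw [if_neg (by omega)]
      · intro i hi
        simp only [Finset.mem_range, not_lt] at hi
        rw [if_pos hi]
    linarith [h1, h2.symm]
  have hTl_tendsto : Filter.Tendsto Tl Filter.atTop (nhds 0) := by
    have h1 : Filter.Tendsto (fun r : ℕ => ∑ i ∈ Finset.range r, (i:ℝ)*c0 i)
        Filter.atTop (nhds ρ) := hsum0.hasSum.tendsto_sum_nat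
    have h2 : Filter.Tendsto (fun r : ℕ => ρ - ∑ i ∈ Finset.range r, (i:ℝ)*c0 i)
        Filter.atTop (nhds (ρ - ρ)) := Filter.Tendsto.sub tendsto_const_nhds h1
    rw [sub_self] at h2
    have : Tl = fun r : ℕ => ρ - ∑ i ∈ Finset.range r, (i:ℝ)*c0 i := funext hTl_eq
    rw [this]
    exact h2
  -- construct the truncation scale Nf
  have hex : ∀ (b : ℕ) (m : ℕ), ∃ n, b ≤ n ∧ Tl n ≤ (1/2:ℝ)^(m+1) := by
    intro b m
    have hε : (0:ℝ) < (1/2:ℝ)^(m+1) := by positivity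
    have h1 : ∀ᶠ n in Filter.atTop, Tl n < (1/2:ℝ)^(m+1) :=
      hTl_tendsto.eventually_lt_const hε
    obtain ⟨n, hn1, hn2⟩ := (h1.and (Filter.eventually_ge_atTop b)).exists
    exact ⟨n, hn2, le_of_lt hn1⟩
  have hNfex : ∃ Nf : ℕ → ℕ, Nf 0 = 0 ∧
      ∀ m, (4 * Nf m + 1 ≤ Nf (m+1) ∧ Tl (Nf (m+1)) ≤ (1/2:ℝ)^(m+1)) := by
    choose F hF1 hF2 using hex
    exact ⟨fun m => Nat.rec 0 (fun m prev => F (4*prev+1) m) m, rfl,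
      fun m => ⟨hF1 _ m, hF2 _ m⟩⟩
  obtain ⟨Nf, hN0, hNprop⟩ := hNfex
  have hgap : ∀ m, 4 * Nf m + 1 ≤ Nf (m+1) := fun m => (hNprop m).1
  -- initial bound for the convex moment
  have hG0 : ∀ n : ℕ, ∑ i ∈ Finset.range n, (DGEDaux.gw Nf i : ℝ) * c0 i ≤ ρ + 1 := by
    intro n
    have hrw : ∀ i ∈ Finset.range n, (DGEDaux.gw Nf i : ℝ) * c0 i
        = ∑ m ∈ Finset.range n, ((i - Nf m : ℕ) : ℝ) * c0 i := by
      intro i hi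
      simp only [Finset.mem_range] at hi
      rw [DGEDaux.gw_eq_sum hgap (le_of_lt hi)]
      rw [← Finset.sum_mul]
      congr 1
      exact_mod_cast rfl
    rw [Finset.sum_congr rfl hrw, Finset.sum_comm]
    have hinner : ∀ m ∈ Finset.range n,
        ∑ i ∈ Finset.range n, ((i - Nf m : ℕ) : ℝ) * c0 i ≤ Tl (Nf m) := by
      intro m _
      have hterm : ∀ i ∈ Finset.range n, ((i - Nf m : ℕ) : ℝ) * c0 i
          ≤ (if Nf m ≤ i then (i:ℝ)*c0 i else 0) := by
        intro i _
        split_ifs with h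
        · apply mul_le_mul_of_nonneg_right _ (hc0 i)
          exact_mod_cast Nat.sub_le i (Nf m)
        · have : i - Nf m = 0 := by omega
          rw [this]; simp
      calc ∑ i ∈ Finset.range n, ((i - Nf m : ℕ) : ℝ) * c0 i
          ≤ ∑ i ∈ Finset.range n, (if Nf m ≤ i then (i:ℝ)*c0 i else 0) :=
            Finset.sum_le_sum hterm
        _ ≤ Tl (Nf m) := by
            refine Summable.sum_le_tsum _ (fun i _ => ?_) (hTlsummand (Nf m))
            split_ifs
            · exact hf0nn i
            · exact le_refl 0
    rcases n with _ | n'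
    · simp; linarith
    calc ∑ m ∈ Finset.range (n'+1), ∑ i ∈ Finset.range (n'+1), ((i - Nf m : ℕ) : ℝ) * c0 i
        ≤ ∑ m ∈ Finset.range (n'+1), Tl (Nf m) := Finset.sum_le_sum hinner
      _ = (∑ m ∈ Finset.range n', Tl (Nf (m+1))) + Tl (Nf 0) := Finset.sum_range_succ' _ _
      _ ≤ (∑ m ∈ Finset.range n', (1/2:ℝ)^(m+1)) + ρ := by
          apply add_le_add _ (by rw [hN0]; exact hTl_le 0)
          exact Finset.sum_le_sum (fun m _ => (hNprop m).2)
      _ ≤ 1 + ρ := by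
          apply add_le_add_left _ ρ
          have h1 : ∀ m ∈ Finset.range n', (1/2:ℝ)^(m+1) = (1/2) * (1/2)^m := by
            intro m _; ring
          rw [Finset.sum_congr rfl h1, ← Finset.mul_sum]
          have := sum_geometric_two_le n'
          calc (1/2:ℝ) * ∑ m ∈ Finset.range n', (1/2)^m
              = (1/2:ℝ) * ∑ m ∈ Finset.range n', (1/2)^m := rfl
            _ ≤ (1/2:ℝ) * 2 := by
                apply mul_le_mul_of_nonneg_left _ (by norm_num)
                calc ∑ m ∈ Finset.range n', ((1:ℝ)/2)^m
                    = ∑ m ∈ Finset.range n', (1/(2:ℝ))^m := rfl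
                  _ ≤ 2 := by
                      apply le_trans _ (sum_geometric_two_le n')
                      apply le_of_eq
                      apply Finset.sum_congr rfl
                      intro m _
                      rw [one_div, inv_pow]
            _ = 1 := by norm_num
      _ = ρ + 1 := by ring
  -- derivative of weighted truncated moments
  have keyD : ∀ m : ℕ, ∀ w : ℕ → ℝ, w 0 = 0 → ∀ s : ℝ, 0 ≤ s →
      HasDerivAt (fun u => ∑ i ∈ Finset.Icc 1 (Nm m), w i * cN m i u)
        (∑ k ∈ Finset.Icc 1 (Nm m), ∑ p ∈ Finset.Icc k (Nm m),
          ∑ j ∈ Finset.Icc 0 (Nm m - k),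
            (w (p-k) - w p + w (j+k) - w j)
              * (a p j k * cN m p s * cN m j s)) s := by
    intro m w hw0 s hs
    have hder : ∀ i ∈ Finset.Icc 1 (Nm m), HasDerivAt (cN m i)
        (QN1 a (Nm m) (fun n => cN m n s) i + QN2 a (Nm m) (fun n => cN m n s) i
          + QN3 a (Nm m) (fun n => cN m n s) i + QN4 a (Nm m) (fun n => cN m n s) i) s := by
      intro i hi
      simp only [Finset.mem_Icc] at hi
      rcases eq_or_lt_of_le hi.2 with heq | hlt
      · subst heq
        have h34 := (hTrunc m s hs).2.2
        have hq1 : QN1 a (Nm m) (fun n => cN m n s) (Nm m) = 0 := by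
          unfold QN1
          rw [Nat.sub_self, Finset.Icc_eq_empty (by omega)]
          simp
        have hq2 : QN2 a (Nm m) (fun n => cN m n s) (Nm m) = 0 := by
          unfold QN2
          rw [Nat.sub_self, Finset.Icc_eq_empty (by omega)]
          simp
        rw [hq1, hq2, zero_add, zero_add]
        exact h34
      · have h2 := (hTrunc m s hs).2.1 i hi.1 (by omega)
        exact h2
    have hsum := HasDerivAt.sum (fun i hi => ((hder i hi).const_mul (w i)))
    have hstar := DGEDaux.star a (Nm m) w hw0 (fun n => cN m n s)
    rw [hstar] at hsum
    rw [Finset.sum_fn] at hsum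
    exact hsum
  -- nonnegativity of truncated solutions
  have hdnn : ∀ m : ℕ, ∀ u : ℝ, 0 ≤ u → ∀ i : ℕ, 0 ≤ cN m i u := by
    intro m u hu i
    rcases le_or_gt i (Nm m) with h | h
    · exact hposN m i h u hu
    · rw [hhigh m i h u]
  -- truncated mass conservation
  have masseq : ∀ m : ℕ, ∀ s : ℝ, 0 ≤ s →
      ∑ i ∈ Finset.Icc 1 (Nm m), (i:ℝ) * cN m i s
        = ∑ i ∈ Finset.Icc 1 (Nm m), (i:ℝ) * c0 i := by
    intro m s hs
    have hzero : ∀ u : ℝ, 0 ≤ u →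
        HasDerivAt (fun u => ∑ i ∈ Finset.Icc 1 (Nm m), (i:ℝ) * cN m i u) 0 u := by
      intro u hu
      have h := keyD m (fun i => (i:ℝ)) (by simp) u hu
      have hzz : ∑ k ∈ Finset.Icc 1 (Nm m), ∑ p ∈ Finset.Icc k (Nm m),
          ∑ j ∈ Finset.Icc 0 (Nm m - k),
            (((p-k : ℕ):ℝ) - (p:ℝ) + ((j+k : ℕ):ℝ) - (j:ℝ))
              * (a p j k * cN m p u * cN m j u) = 0 := by
        apply Finset.sum_eq_zero; intro k hk
        apply Finset.sum_eq_zero; intro p hp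
        apply Finset.sum_eq_zero; intro j hj
        simp only [Finset.mem_Icc] at hk hp hj
        have hco : (((p-k : ℕ):ℝ) - (p:ℝ) + ((j+k : ℕ):ℝ) - (j:ℝ)) = 0 := by
          rw [Nat.cast_sub hp.1]
          push_cast
          ring
        rw [hco, zero_mul]
      rw [hzz] at h
      exact h
    have hcont : ContinuousOn (fun u => ∑ i ∈ Finset.Icc 1 (Nm m), (i:ℝ) * cN m i u)
        (Set.Icc 0 s) := by
      intro u hu
      exact ((hzero u hu.1).continuousAt).continuousWithinAt
    have hconst := constant_of_has_deriv_right_zero hcont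
      (fun u hu => (hzero u hu.1).hasDerivWithinAt)
    have h1 := hconst s (Set.right_mem_Icc.2 hs)
    rw [h1]
    apply Finset.sum_congr rfl
    intro i hi
    simp only [Finset.mem_Icc] at hi
    rw [hinit m i hi.2]
  have massle : ∀ m : ℕ, ∀ s : ℝ, 0 ≤ s →
      ∑ i ∈ Finset.Icc 1 (Nm m), (i:ℝ) * cN m i s ≤ ρ := by
    intro m s hs
    rw [masseq m s hs]
    exact Summable.sum_le_tsum _ (fun i _ => hf0nn i) hsum0
  -- Gronwall bound for the convex moment
  set KG := 16*C*Q*ρ with hKGdef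
  have hKG0 : 0 ≤ KG := by positivity
  set Gm : ℕ → ℝ → ℝ := fun m u => ∑ i ∈ Finset.Icc 1 (Nm m), (DGEDaux.gw Nf i : ℝ) * cN m i u
    with hGmdef
  have hGmnn : ∀ m u, 0 ≤ u → 0 ≤ Gm m u := by
    intro m u hu
    apply Finset.sum_nonneg
    intro i _
    exact mul_nonneg (by positivity) (hdnn m u hu i)
  have gronwall : ∀ m : ℕ, ∀ s : ℝ, 0 ≤ s → Gm m s ≤ (ρ+1) * Real.exp (KG * s) := by
    intro m s hs
    set w : ℕ → ℝ := fun i => (DGEDaux.gw Nf i : ℝ) with hwdef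
    have hw0 : w 0 = 0 := by simp [hwdef, DGEDaux.gw_zero]
    set D : ℝ → ℝ := fun u => ∑ k ∈ Finset.Icc 1 (Nm m), ∑ p ∈ Finset.Icc k (Nm m),
          ∑ j ∈ Finset.Icc 0 (Nm m - k),
            (w (p-k) - w p + w (j+k) - w j)
              * (a p j k * cN m p u * cN m j u) with hDdef
    have hder : ∀ u : ℝ, 0 ≤ u → HasDerivAt (Gm m) (D u) u := by
      intro u hu
      exact keyD m w hw0 u hu
    have hcont : ContinuousOn (Gm m) (Set.Icc 0 s) := by
      intro u hu
      exact ((hder u hu.1).continuousAt).continuousWithinAt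
    have hbound : ∀ u ∈ Set.Ico 0 s, D u ≤ KG * Gm m u + 0 := by
      intro u hu
      have hDb := DGEDaux.Dsum_bound (Nf := Nf) hN0 hgap a C Q q ha hGBb hC hq0 hqsum
        (Nm m) (fun n => cN m n u) (hdnn m u hu.1)
      have hM1le := massle m u hu.1
      have hGnn := hGmnn m u hu.1
      have h2 : 16*C*Q * (∑ i ∈ Finset.Icc 1 (Nm m), (i:ℝ) * cN m i u) * Gm m u
          ≤ 16*C*Q * ρ * Gm m u := by
        apply mul_le_mul_of_nonneg_right _ hGnn
        apply mul_le_mul_of_nonneg_left hM1le (by positivity)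
      calc D u ≤ 16*C*Q * (∑ i ∈ Finset.Icc 1 (Nm m), (i:ℝ) * cN m i u) * Gm m u := hDb
        _ ≤ 16*C*Q*ρ * Gm m u := h2
        _ = KG * Gm m u + 0 := by rw [hKGdef]; ring
    have hinit' : Gm m 0 ≤ ρ + 1 := by
      have h1 : Gm m 0 = ∑ i ∈ Finset.Icc 1 (Nm m), (DGEDaux.gw Nf i : ℝ) * c0 i := by
        apply Finset.sum_congr rfl
        intro i hi
        simp only [Finset.mem_Icc] at hi
        rw [hinit m i hi.2]
      rw [h1]
      calc ∑ i ∈ Finset.Icc 1 (Nm m), (DGEDaux.gw Nf i : ℝ) * c0 i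
          ≤ ∑ i ∈ Finset.range (Nm m + 1), (DGEDaux.gw Nf i : ℝ) * c0 i := by
            apply Finset.sum_le_sum_of_subset_of_nonneg
            · intro i hi
              simp only [Finset.mem_Icc] at hi
              simp only [Finset.mem_range]
              omega
            · intro i _ _
              exact mul_nonneg (by positivity) (hc0 i)
        _ ≤ ρ + 1 := hG0 (Nm m + 1)
    have := le_gronwallBound_of_liminf_deriv_right_le hcont
      (fun x hx r hr => ((hder x hx.1).hasDerivWithinAt).liminf_right_slope_le hr)
      hinit' hbound s (Set.right_mem_Icc.2 hs)
    rwa [sub_zero, gronwallBound_ε0] at this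
  -- uniform bound on the tails of the truncated masses
  have tailbd : ∀ L : ℕ, ∀ m : ℕ, ∀ s : ℝ, 0 ≤ s →
      ∑ i ∈ Finset.Icc (2 * Nf L + 1) (Nm m), (i:ℝ) * cN m i s
        ≤ 2 / ((L:ℝ)+1) * ((ρ+1) * Real.exp (KG * s)) := by
    intro L m s hs
    have hL1 : (0:ℝ) < (L:ℝ) + 1 := by positivity
    have h1 : ∀ i ∈ Finset.Icc (2 * Nf L + 1) (Nm m),
        (i:ℝ) * cN m i s ≤ 2 / ((L:ℝ)+1) * ((DGEDaux.gw Nf i : ℝ) * cN m i s) := by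
      intro i hi
      simp only [Finset.mem_Icc] at hi
      have hlb := DGEDaux.gw_tail_lb (Nf := Nf) hgap (L := L) (i := i) (by omega)
      have hlbR : ((L:ℝ)+1) * (i:ℝ) ≤ 2 * (DGEDaux.gw Nf i : ℝ) := by exact_mod_cast hlb
      have hcnn := hdnn m s hs i
      have h2 : (i:ℝ) ≤ 2 / ((L:ℝ)+1) * (DGEDaux.gw Nf i : ℝ) := by
        rw [div_mul_eq_mul_div, le_div_iff₀ hL1]
        linarith
      calc (i:ℝ) * cN m i s ≤ (2 / ((L:ℝ)+1) * (DGEDaux.gw Nf i : ℝ)) * cN m i s :=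
            mul_le_mul_of_nonneg_right h2 hcnn
        _ = 2 / ((L:ℝ)+1) * ((DGEDaux.gw Nf i : ℝ) * cN m i s) := by ring
    calc ∑ i ∈ Finset.Icc (2 * Nf L + 1) (Nm m), (i:ℝ) * cN m i s
        ≤ ∑ i ∈ Finset.Icc (2 * Nf L + 1) (Nm m),
            2 / ((L:ℝ)+1) * ((DGEDaux.gw Nf i : ℝ) * cN m i s) := Finset.sum_le_sum h1
      _ = 2 / ((L:ℝ)+1) * ∑ i ∈ Finset.Icc (2 * Nf L + 1) (Nm m),
            (DGEDaux.gw Nf i : ℝ) * cN m i s := by rw [Finset.mul_sum]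
      _ ≤ 2 / ((L:ℝ)+1) * Gm m s := by
          apply mul_le_mul_of_nonneg_left _ (by positivity)
          apply Finset.sum_le_sum_of_subset_of_nonneg
          · intro i hi
            simp only [Finset.mem_Icc] at hi ⊢
            omega
          · intro i _ _
            exact mul_nonneg (by positivity) (hdnn m s hs i)
      _ ≤ 2 / ((L:ℝ)+1) * ((ρ+1) * Real.exp (KG * s)) := by
          apply mul_le_mul_of_nonneg_left (gronwall m s hs) (by positivity)
  -- summability at time t
  have hmem : t ∈ Set.Ici (0:ℝ) := ht
  have hcnn : ∀ i, 0 ≤ c i t := (hc.2.1 t hmem).1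
  have hsumt : Summable (fun i : ℕ => (i:ℝ) * c i t) := by
    apply Summable.of_nonneg_of_le (fun i => mul_nonneg (by positivity) (hcnn i)) _
      (hc.2.1 t hmem).2
    intro i
    have := hcnn i
    nlinarith [Nat.cast_nonneg (α := ℝ) i]
  have hNmlower : ∀ m : ℕ, m ≤ Nm m := fun m => hNmmono.le_apply
  -- upper bound
  have upper : ∑' i : ℕ, (i:ℝ) * c i t ≤ ρ := by
    apply Summable.tsum_le_of_sum_le hsumt
    intro sfin
    set M := sfin.sup id with hMdef
    have hsub : sfin ⊆ Finset.range (M+1) := by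
      intro i hi
      simp only [Finset.mem_range]
      have := Finset.le_sup (f := id) hi
      simp only [id_eq] at this
      omega
    have h1 : ∑ i ∈ sfin, (i:ℝ) * c i t ≤ ∑ i ∈ Finset.range (M+1), (i:ℝ) * c i t := by
      apply Finset.sum_le_sum_of_subset_of_nonneg hsub
      intro i _ _
      exact mul_nonneg (by positivity) (hcnn i)
    have hlim' : Filter.Tendsto (fun m => ∑ i ∈ Finset.range (M+1), (i:ℝ) * cN m i t)
        Filter.atTop (nhds (∑ i ∈ Finset.range (M+1), (i:ℝ) * c i t)) := by
      apply tendsto_finset_sum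
      intro i _
      exact (hlim i t ht).const_mul ((i:ℝ))
    have h2 : ∑ i ∈ Finset.range (M+1), (i:ℝ) * c i t ≤ ρ := by
      apply le_of_tendsto hlim'
      filter_upwards [Filter.eventually_ge_atTop (M+1)] with m hm
      have hNmge : M ≤ Nm m := le_trans (by omega) (hNmlower m)
      have e1 : ∑ i ∈ Finset.range (M+1), (i:ℝ) * cN m i t
          ≤ ∑ i ∈ Finset.Icc 1 (Nm m), (i:ℝ) * cN m i t := by
        have hz : Finset.range (M+1) = insert 0 (Finset.Icc 1 M) := by
          apply Finset.ext
          intro i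
          simp only [Finset.mem_range, Finset.mem_insert, Finset.mem_Icc]
          omega
        rw [hz, Finset.sum_insert (by simp)]
        simp only [Nat.cast_zero, zero_mul, zero_add]
        apply Finset.sum_le_sum_of_subset_of_nonneg
        · intro i hi
          simp only [Finset.mem_Icc] at hi ⊢
          omega
        · intro i _ _
          exact mul_nonneg (by positivity) (hdnn m t ht i)
      exact le_trans e1 (massle m t ht)
    exact le_trans h1 h2
  -- lower bound
  have lower : ρ ≤ ∑' i : ℕ, (i:ℝ) * c i t := by
    apply le_of_forall_pos_le_add
    intro ε hε
    set E := (ρ+1) * Real.exp (KG * t) with hEdef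
    have hE0 : 0 < E := by positivity
    obtain ⟨L, hL⟩ : ∃ L : ℕ, 2 * E / (ε/2) < (L:ℝ) := exists_nat_gt _
    have hLtail : 2 / ((L:ℝ)+1) * E ≤ ε / 2 := by
      have hL1 : (0:ℝ) < (L:ℝ) + 1 := by positivity
      rw [div_mul_eq_mul_div, div_le_iff₀ hL1]
      have h2 : 2 * E / (ε/2) < (L:ℝ) + 1 := by linarith
      rw [div_lt_iff₀ (by linarith : (0:ℝ) < ε/2)] at h2
      linarith
    -- choose the cutoff M'
    have hpart : Filter.Tendsto (fun r : ℕ => ∑ i ∈ Finset.range r, (i:ℝ)*c0 i)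
        Filter.atTop (nhds ρ) := hsum0.hasSum.tendsto_sum_nat
    have hpart2 : ∀ᶠ r in Filter.atTop, ρ - ε/2 < ∑ i ∈ Finset.range r, (i:ℝ)*c0 i :=
      hpart.eventually_const_lt (by linarith)
    obtain ⟨M', hM'1, hM'2⟩ :=
      ((Filter.eventually_ge_atTop (2 * Nf L + 1)).and hpart2).exists
    -- the key estimate for large m
    have hstep : ∀ m : ℕ, M' ≤ Nm m →
        ρ - ε ≤ ∑ i ∈ Finset.range M', (i:ℝ) * cN m i t := by
      intro m hm
      have hsplit : ∑ i ∈ Finset.Icc 1 (Nm m), (i:ℝ) * cN m i t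
          = (∑ i ∈ Finset.Icc 1 (M'-1), (i:ℝ) * cN m i t)
            + ∑ i ∈ Finset.Icc M' (Nm m), (i:ℝ) * cN m i t := by
        have h0 : Finset.Icc 1 (Nm m) = Finset.Ioc 0 (Nm m) := Finset.Icc_add_one_left_eq_Ioc 0 (Nm m)
        have h1 : Finset.Icc 1 (M'-1) = Finset.Ioc 0 (M'-1) := Finset.Icc_add_one_left_eq_Ioc 0 (M'-1)
        have h2 : Finset.Icc M' (Nm m) = Finset.Ioc (M'-1) (Nm m) := by
          rw [← Finset.Icc_add_one_left_eq_Ioc]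
          congr 1
          omega
        rw [h0, h1, h2]
        rw [← Finset.sum_Ioc_consecutive _ (by omega : 0 ≤ M'-1) (by omega : M'-1 ≤ Nm m)]
      have htail : ∑ i ∈ Finset.Icc M' (Nm m), (i:ℝ) * cN m i t ≤ ε/2 := by
        calc ∑ i ∈ Finset.Icc M' (Nm m), (i:ℝ) * cN m i t
            ≤ ∑ i ∈ Finset.Icc (2 * Nf L + 1) (Nm m), (i:ℝ) * cN m i t := by
              apply Finset.sum_le_sum_of_subset_of_nonneg
              · intro i hi
                simp only [Finset.mem_Icc] at hi ⊢
                omega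
              · intro i _ _
                exact mul_nonneg (by positivity) (hdnn m t ht i)
          _ ≤ 2 / ((L:ℝ)+1) * E := tailbd L m t ht
          _ ≤ ε/2 := hLtail
      have hmass := masseq m t ht
      have hlow : ρ - ε/2 ≤ ∑ i ∈ Finset.Icc 1 (Nm m), (i:ℝ) * c0 i := by
        calc ρ - ε/2 ≤ ∑ i ∈ Finset.range M', (i:ℝ)*c0 i := le_of_lt hM'2
          _ ≤ ∑ i ∈ Finset.Icc 1 (Nm m), (i:ℝ) * c0 i := by
              have hz : Finset.range M' = insert 0 (Finset.Icc 1 (M'-1)) := by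
                apply Finset.ext
                intro i
                simp only [Finset.mem_range, Finset.mem_insert, Finset.mem_Icc]
                omega
              rw [hz, Finset.sum_insert (by simp)]
              simp only [Nat.cast_zero, zero_mul, zero_add]
              apply Finset.sum_le_sum_of_subset_of_nonneg
              · intro i hi
                simp only [Finset.mem_Icc] at hi ⊢
                omega
              · intro i _ _
                exact hf0nn i
      have hfin : ∑ i ∈ Finset.range M', (i:ℝ) * cN m i t
          = (∑ i ∈ Finset.Icc 1 (Nm m), (i:ℝ) * cN m i t)
            - ∑ i ∈ Finset.Icc M' (Nm m), (i:ℝ) * cN m i t := by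
        rw [hsplit]
        have hz : Finset.range M' = insert 0 (Finset.Icc 1 (M'-1)) := by
          apply Finset.ext
          intro i
          simp only [Finset.mem_range, Finset.mem_insert, Finset.mem_Icc]
          omega
        rw [hz, Finset.sum_insert (by simp)]
        simp only [Nat.cast_zero, zero_mul, zero_add]
        ring
      rw [hfin, hmass]
      linarith
    have hlim2 : Filter.Tendsto (fun m => ∑ i ∈ Finset.range M', (i:ℝ) * cN m i t)
        Filter.atTop (nhds (∑ i ∈ Finset.range M', (i:ℝ) * c i t)) := by
      apply tendsto_finset_sum
      intro i _
      exact (hlim i t ht).const_mul ((i:ℝ))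
    have h3 : ρ - ε ≤ ∑ i ∈ Finset.range M', (i:ℝ) * c i t := by
      apply ge_of_tendsto hlim2
      filter_upwards [Filter.eventually_ge_atTop M'] with m hm
      exact hstep m (le_trans hm (hNmlower m))
    have h4 : ∑ i ∈ Finset.range M', (i:ℝ) * c i t ≤ ∑' i : ℕ, (i:ℝ) * c i t := by
      refine Summable.sum_le_tsum _ (fun i _ => ?_) hsumt
      exact mul_nonneg (by positivity) (hcnn i)
    linarith
  exact le_antisymm upper lower
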